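/- Let K be a cell over a finite set P, let Q be the set of ports of P that are flexible for K, and let flex(K) = { g ∩ Q | g ∈ K }, a cell over Q. Then flex(K) is a Kekulé cell over Q if and only if K is a Kekulé cell over P. -/
import Mathlib


open scoped symmDiff

namespace Kekule

abbrev Node := ℕ
abbrev Graph := Finset (Finset Node)

/-- `G` is a graph: every edge is a 2-element set of nodes. -/
def IsGraph (G : Graph) : Prop := ∀ e ∈ G, e.card = 2

/-- The nodes of a graph: the elements of its edges. -/
def nodes (G : Graph) : Finset Node := G.biUnion id

/-- The number of edges of `G` containing `v`. -/
def deg (G : Graph) (v : Node) : ℕ := (G.filter (fun e => v ∈ e)).card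

/-- A port is a node contained in exactly one edge. -/
def ports (G : Graph) : Finset Node := (nodes G).filter (fun v => deg G v = 1)

/-- An internal node is a node that is not a port. -/
def internal (G : Graph) : Finset Node := (nodes G).filter (fun v => deg G v ≠ 1)

/-- A Kekulé state of `G`: a subgraph `W ⊆ G` such that every internal node
of `G` lies in exactly one edge of `W`. -/
def IsKekule (G W : Graph) : Prop := W ⊆ G ∧ ∀ v ∈ internal G, deg W v = 1

/-- A curve in `G`: a subgraph `C ⊆ G` such that every node of `C` that is
internal in `G` lies in exactly two edges of `C`. -/
def IsCurve (G C : Graph) : Prop :=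
  C ⊆ G ∧ ∀ v ∈ nodes C, v ∈ internal G → deg C v = 2

/-- `(C, W)` is an alternating curve in `G`: both are subgraphs of `G`,
`C` is a curve in `G`, and `W ∩ C` is a Kekulé state of `C`. -/
def IsAlternating (G C W : Graph) : Prop :=
  W ⊆ G ∧ IsCurve G C ∧ IsKekule C (W ∩ C)

/-- `W|P`: the set of ports in `P` that lie in some edge of `W`. -/
def rest (W : Graph) (P : Finset Node) : Finset Node := P ∩ nodes W

/-- The set of Kekulé port assignments of `G`. -/
def KP (G : Graph) : Set (Finset Node) :=
  {g | ∃ W, IsKekule G W ∧ rest W (ports G) = g}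

/-- A cell `K` over `P` is a Kekulé cell if it is the set of Kekulé port
assignments of some graph with port set `P`. -/
def IsKekuleCell (P : Finset Node) (K : Set (Finset Node)) : Prop :=
  ∃ G, IsGraph G ∧ ports G = P ∧ KP G = K

/-- A channel: a 2-element subset of `P`. -/
def IsChannel (P : Finset Node) (c : Finset Node) : Prop := c ⊆ P ∧ c.card = 2

/-- A port `p` is flexible for a cell `K`. -/
def Flexible (K : Set (Finset Node)) (p : Node) : Prop :=
  ∃ g ∈ K, ∃ g' ∈ K, p ∈ g ∧ p ∉ g'

/-- Hamming distance between two port assignments. -/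
def hdist (k k' : Finset Node) : ℕ := (k ∆ k').card

/-- The Hamming diameter of `K` equals `n`. -/
def HamDiamEq (K : Set (Finset Node)) (n : ℕ) : Prop :=
  (∃ k ∈ K, ∃ k' ∈ K, hdist k k' = n) ∧ ∀ k ∈ K, ∀ k' ∈ K, hdist k k' ≤ n

/-- `G` is connected: nonempty, and any two distinct nodes are joined by a walk. -/
def Connected (G : Graph) : Prop :=
  G.Nonempty ∧ ∀ p ∈ nodes G, ∀ q ∈ nodes G, p ≠ q →
    ∃ (n : ℕ) (f : ℕ → Node), f 0 = p ∧ f n = q ∧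
      ∀ i < n, ({f i, f (i + 1)} : Finset Node) ∈ G

/-- `C` is a simple path between `p` and `q`. -/
def IsSimplePath (C : Graph) (p q : Node) : Prop :=
  Connected C ∧ ports C = {p, q} ∧
    ∀ v ∈ nodes C, v ≠ p → v ≠ q → deg C v = 2

/-- A cycle: a connected graph all of whose nodes lie in exactly two edges. -/
def IsCycle (C : Graph) : Prop :=
  Connected C ∧ ∀ v ∈ nodes C, deg C v = 2

/-- A semi-Kekulé state of `G`: every internal node of `G` lies in an odd
number of edges of `W`. -/
def IsSemiKekule (G W : Graph) : Prop :=
  W ⊆ G ∧ ∀ v ∈ internal G, deg W v % 2 = 1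

/-- The signature of `G`. -/
def sig (G : Graph) : ℕ := (internal G).card % 2

/-- `G` is omniconjugated. -/
def Omniconjugated (G : Graph) : Prop :=
  2 ≤ (ports G).card ∧ KP G = {g | g ⊆ ports G ∧ g.card % 2 = sig G}

instance : Std.Commutative (α := Finset Node) (· ∆ ·) := ⟨symmDiff_comm⟩
instance : Std.Associative (α := Finset Node) (· ∆ ·) := ⟨symmDiff_assoc⟩

/-- The `⊕`-sum of a finite family of port assignments. -/
def xorSum (D : Finset (Finset Node)) : Finset Node := D.fold (· ∆ ·) ∅ id

-- infrastructure
lemma mem_nodes {G : Graph} {v : Node} : v ∈ nodes G ↔ ∃ e ∈ G, v ∈ e := by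
  simp [nodes]

lemma nodes_union (G H : Graph) : nodes (G ∪ H) = nodes G ∪ nodes H := by
  ext v
  simp only [mem_nodes, Finset.mem_union]
  constructor
  · rintro ⟨e, h | h, hv⟩
    · exact Or.inl ⟨e, h, hv⟩
    · exact Or.inr ⟨e, h, hv⟩
  · rintro (⟨e, h, hv⟩ | ⟨e, h, hv⟩)
    exacts [⟨e, Or.inl h, hv⟩, ⟨e, Or.inr h, hv⟩]

lemma deg_eq_zero {H : Graph} {v : Node} (h : v ∉ nodes H) : deg H v = 0 := by
  rw [deg, Finset.card_eq_zero, Finset.filter_eq_empty_iff]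
  intro e he hv
  exact h (mem_nodes.2 ⟨e, he, hv⟩)

lemma mem_nodes_iff_deg_pos {G : Graph} {v : Node} : v ∈ nodes G ↔ 0 < deg G v := by
  rw [deg, Finset.card_pos]
  constructor
  · rw [mem_nodes]; rintro ⟨e, he, hv⟩; exact ⟨e, Finset.mem_filter.2 ⟨he, hv⟩⟩
  · rintro ⟨e, he⟩
    rw [Finset.mem_filter] at he
    exact mem_nodes.2 ⟨e, he.1, he.2⟩

lemma deg_union {G H : Graph} (h : Disjoint G H) (v : Node) :
    deg (G ∪ H) v = deg G v + deg H v := by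
  rw [deg, Finset.filter_union, Finset.card_union_of_disjoint
    (Finset.disjoint_filter_filter h)]
  rfl

lemma deg_le {W G : Graph} (h : W ⊆ G) (v : Node) : deg W v ≤ deg G v :=
  Finset.card_le_card (Finset.filter_subset_filter _ h)

lemma mem_ports {G : Graph} {v : Node} : v ∈ ports G ↔ deg G v = 1 := by
  rw [ports, Finset.mem_filter, and_iff_right_iff_imp]
  intro h
  exact mem_nodes_iff_deg_pos.2 (by omega)

lemma mem_internal {G : Graph} {v : Node} :
    v ∈ internal G ↔ v ∈ nodes G ∧ deg G v ≠ 1 := Finset.mem_filter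

lemma nodes_subset {W G : Graph} (h : W ⊆ G) : nodes W ⊆ nodes G := by
  intro v hv
  rw [mem_nodes] at hv ⊢
  obtain ⟨e, he, hv⟩ := hv
  exact ⟨e, h he, hv⟩

lemma ports_subset_nodes (G : Graph) : ports G ⊆ nodes G := Finset.filter_subset _ _

lemma KP_subset {G : Graph} {g : Finset Node} (h : g ∈ KP G) : g ⊆ ports G := by
  obtain ⟨W, _, rfl⟩ := h
  exact Finset.inter_subset_left

lemma edge_disjoint {G H : Graph} {p : Node} (hG : IsGraph G) (hH : IsGraph H)
    (hn : nodes G ∩ nodes H ⊆ {p}) : Disjoint G H := by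
  rw [Finset.disjoint_left]
  intro e heG heH
  have h2 := hG e heG
  have : e ⊆ {p} := by
    intro v hv
    exact hn (Finset.mem_inter.2 ⟨mem_nodes.2 ⟨e, heG, hv⟩, mem_nodes.2 ⟨e, heH, hv⟩⟩)
  have := Finset.card_le_card this
  simp at this; omega


-- relabeling
def mapG (f : ℕ → ℕ) (G : Graph) : Graph := G.image (fun e => e.image f)

section MapG
variable {f : ℕ → ℕ} {G : Graph}
  (hf : ∀ a ∈ nodes G, ∀ b ∈ nodes G, f a = f b → a = b)

lemma mem_nodes_of_mem_edge {e : Finset Node} (he : e ∈ G) {v : Node} (hv : v ∈ e) :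
    v ∈ nodes G := mem_nodes.2 ⟨e, he, hv⟩

include hf

lemma mapG_edge_card {e : Finset Node} (he : e ∈ G) : (e.image f).card = e.card :=
  Finset.card_image_of_injOn fun a ha b hb =>
    hf a (mem_nodes_of_mem_edge he ha) b (mem_nodes_of_mem_edge he hb)

lemma mapG_edge_inj {e e' : Finset Node} (he : e ∈ G) (he' : e' ∈ G)
    (h : e.image f = e'.image f) : e = e' := by
  ext v
  constructor
  · intro hv
    have : f v ∈ e'.image f := h ▸ Finset.mem_image_of_mem f hv
    obtain ⟨u, hu, hfu⟩ := Finset.mem_image.1 this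
    rwa [hf u (mem_nodes_of_mem_edge he' hu) v (mem_nodes_of_mem_edge he hv) hfu] at hu
  · intro hv
    have : f v ∈ e.image f := h.symm ▸ Finset.mem_image_of_mem f hv
    obtain ⟨u, hu, hfu⟩ := Finset.mem_image.1 this
    rwa [hf u (mem_nodes_of_mem_edge he hu) v (mem_nodes_of_mem_edge he' hv) hfu] at hu

lemma mapG_nodes : nodes (mapG f G) = (nodes G).image f := by
  ext w
  simp only [mem_nodes, mapG, Finset.mem_image]
  constructor
  · rintro ⟨e', ⟨e, he, rfl⟩, hw⟩
    obtain ⟨v, hv, rfl⟩ := Finset.mem_image.1 hw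
    exact ⟨v, ⟨e, he, hv⟩, rfl⟩
  · rintro ⟨v, ⟨e, he, hv⟩, rfl⟩
    exact ⟨e.image f, ⟨e, he, rfl⟩, Finset.mem_image_of_mem f hv⟩

lemma mapG_mem_edge_iff {e : Finset Node} (he : e ∈ G) {v : Node} (hv : v ∈ nodes G) :
    f v ∈ e.image f ↔ v ∈ e := by
  rw [Finset.mem_image]
  constructor
  · rintro ⟨u, hu, hfu⟩
    rwa [hf u (mem_nodes_of_mem_edge he hu) v hv hfu] at hu
  · intro h; exact ⟨v, h, rfl⟩

lemma mapG_deg {W : Graph} (hW : W ⊆ G) {v : Node} (hv : v ∈ nodes G) :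
    deg (mapG f W) (f v) = deg W v := by
  have hkey : (mapG f W).filter (fun e => f v ∈ e) =
      (W.filter (fun e => v ∈ e)).image (fun e => e.image f) := by
    ext a
    simp only [Finset.mem_filter, mapG, Finset.mem_image]
    constructor
    · rintro ⟨⟨e, he, rfl⟩, hfv⟩
      exact ⟨e, ⟨he, (mapG_mem_edge_iff hf (hW he) hv).1 hfv⟩, rfl⟩
    · rintro ⟨e, ⟨he, hve⟩, rfl⟩
      exact ⟨⟨e, he, rfl⟩, (mapG_mem_edge_iff hf (hW he) hv).2 hve⟩
  rw [deg, hkey, Finset.card_image_of_injOn, deg]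
  intro a ha b hb
  exact mapG_edge_inj hf (hW (Finset.mem_filter.1 ha).1) (hW (Finset.mem_filter.1 hb).1)

lemma mapG_isGraph (hG : IsGraph G) : IsGraph (mapG f G) := by
  rintro e' he'
  obtain ⟨e, he, rfl⟩ := Finset.mem_image.1 he'
  rw [mapG_edge_card hf he]
  exact hG e he

lemma mapG_ports : ports (mapG f G) = (ports G).image f := by
  ext w
  simp only [mem_ports, Finset.mem_image]
  constructor
  · intro h
    have hw : w ∈ nodes (mapG f G) := mem_nodes_iff_deg_pos.2 (by omega)
    rw [mapG_nodes hf, Finset.mem_image] at hw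
    obtain ⟨v, hv, rfl⟩ := hw
    exact ⟨v, by rwa [mapG_deg hf (le_refl G) hv] at h, rfl⟩
  · rintro ⟨v, hv, rfl⟩
    rw [mapG_deg hf (le_refl G) (mem_nodes_iff_deg_pos.2 (by omega))]
    exact hv

omit hf in
lemma mapG_subset {W : Graph} (hW : W ⊆ G) : mapG f W ⊆ mapG f G :=
  Finset.image_subset_image hW

lemma mapG_kekule_iff {W : Graph} (hW : W ⊆ G) :
    IsKekule (mapG f G) (mapG f W) ↔ IsKekule G W := by
  constructor
  · rintro ⟨_, h⟩
    refine ⟨hW, fun v hv => ?_⟩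
    rw [mem_internal] at hv
    have : f v ∈ internal (mapG f G) := by
      rw [mem_internal, mapG_nodes hf, mapG_deg hf (le_refl G) hv.1]
      exact ⟨Finset.mem_image_of_mem f hv.1, hv.2⟩
    have := h (f v) this
    rwa [mapG_deg hf hW hv.1] at this
  · rintro ⟨_, h⟩
    refine ⟨mapG_subset hW, fun w hw => ?_⟩
    rw [mem_internal, mapG_nodes hf] at hw
    obtain ⟨v, hv, rfl⟩ := Finset.mem_image.1 hw.1
    rw [mapG_deg hf (le_refl G) hv] at hw
    rw [mapG_deg hf hW hv]
    exact h v (mem_internal.2 ⟨hv, hw.2⟩)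

lemma mapG_rest {W : Graph} (hW : W ⊆ G) :
    rest (mapG f W) (ports (mapG f G)) = (rest W (ports G)).image f := by
  have hfW : ∀ a ∈ nodes W, ∀ b ∈ nodes W, f a = f b → a = b :=
    fun a ha b hb => hf a (nodes_subset hW ha) b (nodes_subset hW hb)
  rw [mapG_ports hf, rest, rest, mapG_nodes hfW]
  ext w
  simp only [Finset.mem_inter, Finset.mem_image]
  constructor
  · rintro ⟨⟨q, hq, rfl⟩, ⟨u, hu, hfu⟩⟩
    have : u = q := hf u (nodes_subset hW hu) q (ports_subset_nodes G hq) hfu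
    subst this
    exact ⟨u, ⟨hq, hu⟩, hfu⟩
  · rintro ⟨v, ⟨hv1, hv2⟩, rfl⟩
    exact ⟨⟨v, hv1, rfl⟩, ⟨v, hv2, rfl⟩⟩

lemma mapG_KP : KP (mapG f G) = (fun g => g.image f) '' KP G := by
  ext k
  simp only [KP, Set.mem_image, Set.mem_setOf_eq]
  constructor
  · rintro ⟨W', ⟨hW'sub, hW'⟩, rfl⟩
    set W : Graph := G.filter (fun e => e.image f ∈ W') with hWdef
    have hWG : W ⊆ G := Finset.filter_subset _ _
    have hWeq : mapG f W = W' := by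
      apply Finset.Subset.antisymm
      · intro a ha
        obtain ⟨e, he, rfl⟩ := Finset.mem_image.1 ha
        exact (Finset.mem_filter.1 he).2
      · intro a ha
        obtain ⟨e, he, rfl⟩ := Finset.mem_image.1 (hW'sub ha)
        exact Finset.mem_image_of_mem _ (Finset.mem_filter.2 ⟨he, ha⟩)
    refine ⟨rest W (ports G), ⟨W, ?_, rfl⟩, ?_⟩
    · rw [← mapG_kekule_iff hf hWG, hWeq]; exact ⟨hW'sub, hW'⟩
    · rw [← mapG_rest hf hWG, hWeq]
  · rintro ⟨g, ⟨W, hW, rfl⟩, rfl⟩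
    exact ⟨mapG f W, (mapG_kekule_iff hf hW.1).2 hW, mapG_rest hf hW.1⟩

end MapG

section Glue
variable {G H : Graph} {p : Node}

lemma shared_node (hn : nodes G ∩ nodes H ⊆ {p}) {v : Node}
    (h1 : v ∈ nodes G) (h2 : v ∈ nodes H) : v = p := by
  have := hn (Finset.mem_inter.2 ⟨h1, h2⟩)
  simpa using this

variable (hG : IsGraph G) (hH : IsGraph H) (hn : nodes G ∩ nodes H ⊆ {p})
  (hpG : p ∈ ports G) (hpH : p ∈ ports H)

include hG hH hn hpG hpH

lemma glue_ports : ports (G ∪ H) = (ports G ∪ ports H).erase p := by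
  have hdisj := edge_disjoint hG hH hn
  ext v
  rw [Finset.mem_erase, Finset.mem_union, mem_ports, mem_ports, mem_ports,
    deg_union hdisj]
  by_cases hvp : v = p
  · subst hvp
    have h1 := mem_ports.1 hpG
    have h2 := mem_ports.1 hpH
    simp only [ne_eq, not_true_eq_false, false_and, iff_false]
    omega
  · simp only [hvp, ne_eq, not_false_eq_true, true_and]
    have dG := @mem_nodes_iff_deg_pos G v
    have dH := @mem_nodes_iff_deg_pos H v
    have hnb : ¬(0 < deg G v ∧ 0 < deg H v) := fun ⟨a, b⟩ => hvp (shared_node hn (dG.2 a) (dH.2 b))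
    omega

lemma glue_rest {Wg Wh : Graph} (hWg : Wg ⊆ G) (hWh : Wh ⊆ H) :
    rest (Wg ∪ Wh) (ports (G ∪ H)) =
      (rest Wg (ports G) ∪ rest Wh (ports H)).erase p := by
  rw [glue_ports hG hH hn hpG hpH]
  ext v
  simp only [rest, Finset.mem_inter, Finset.mem_erase, Finset.mem_union, nodes_union]
  have hc1 : v ∈ ports G → v ∈ nodes Wh → v = p := fun h1 h2 =>
    shared_node hn (ports_subset_nodes G h1) (nodes_subset hWh h2)
  have hc2 : v ∈ ports H → v ∈ nodes Wg → v = p := fun h1 h2 =>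
    shared_node hn (nodes_subset hWg h2) (ports_subset_nodes H h1)
  tauto

lemma glue_KP : KP (G ∪ H) =
    {k | ∃ g ∈ KP G, ∃ h ∈ KP H, (p ∈ g ↔ p ∉ h) ∧ (g ∪ h).erase p = k} := by
  have hdisj := edge_disjoint hG hH hn
  have hdegGp : deg G p = 1 := mem_ports.1 hpG
  have hdegHp : deg H p = 1 := mem_ports.1 hpH
  have hrg : ∀ Wg : Graph, Wg ⊆ G → (p ∈ rest Wg (ports G) ↔ deg Wg p = 1) := by
    intro Wg hWg
    rw [rest, Finset.mem_inter, mem_nodes_iff_deg_pos]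
    have := deg_le hWg p
    constructor
    · rintro ⟨_, h⟩; omega
    · intro h; exact ⟨hpG, by omega⟩
  have hrh : ∀ Wh : Graph, Wh ⊆ H → (p ∈ rest Wh (ports H) ↔ deg Wh p = 1) := by
    intro Wh hWh
    rw [rest, Finset.mem_inter, mem_nodes_iff_deg_pos]
    have := deg_le hWh p
    constructor
    · rintro ⟨_, h⟩; omega
    · intro h; exact ⟨hpH, by omega⟩
  ext k
  simp only [KP, Set.mem_setOf_eq]
  constructor
  · rintro ⟨W, ⟨hWsub, hWint⟩, rfl⟩
    set Wg : Graph := W ∩ G with hWgdef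
    set Wh : Graph := W ∩ H with hWhdef
    have hWgG : Wg ⊆ G := Finset.inter_subset_right
    have hWhH : Wh ⊆ H := Finset.inter_subset_right
    have hWeq : Wg ∪ Wh = W := by
      rw [hWgdef, hWhdef, ← Finset.inter_union_distrib_left]
      exact Finset.inter_eq_left.2 hWsub
    have hdegW : ∀ v, deg W v = deg Wg v + deg Wh v := by
      intro v
      rw [← hWeq, deg_union (Finset.disjoint_of_subset_left hWgG
        (Finset.disjoint_of_subset_right hWhH hdisj))]
    have hpint : p ∈ internal (G ∪ H) := by
      rw [mem_internal, nodes_union, deg_union hdisj]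
      exact ⟨Finset.mem_union_left _ (ports_subset_nodes G hpG), by omega⟩
    have hdegWp := hWint p hpint
    have hkekG : IsKekule G Wg := by
      refine ⟨hWgG, fun v hv => ?_⟩
      rw [mem_internal] at hv
      have hvp : v ≠ p := fun h => by rw [h] at hv; exact hv.2 hdegGp
      have hdH : deg H v = 0 := by
        by_contra h
        exact hvp (shared_node hn hv.1 (mem_nodes_iff_deg_pos.2 (by omega)))
      have hvint : v ∈ internal (G ∪ H) := by
        rw [mem_internal, nodes_union, deg_union hdisj, hdH]
        exact ⟨Finset.mem_union_left _ hv.1, by omega⟩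
      have h1 := hWint v hvint
      have h2 : deg Wh v ≤ deg H v := deg_le hWhH v
      have h3 := hdegW v
      omega
    have hkekH : IsKekule H Wh := by
      refine ⟨hWhH, fun v hv => ?_⟩
      rw [mem_internal] at hv
      have hvp : v ≠ p := fun h => by rw [h] at hv; exact hv.2 hdegHp
      have hdG : deg G v = 0 := by
        by_contra h
        exact hvp (shared_node hn (mem_nodes_iff_deg_pos.2 (by omega)) hv.1)
      have hvint : v ∈ internal (G ∪ H) := by
        rw [mem_internal, nodes_union, deg_union hdisj, hdG]
        exact ⟨Finset.mem_union_right _ hv.1, by omega⟩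
      have h1 := hWint v hvint
      have h2 : deg Wg v ≤ deg G v := deg_le hWgG v
      have h3 := hdegW v
      omega
    refine ⟨rest Wg (ports G), ⟨Wg, hkekG, rfl⟩, rest Wh (ports H), ⟨Wh, hkekH, rfl⟩, ?_, ?_⟩
    · rw [hrg Wg hWgG, hrh Wh hWhH]
      have h1 : deg Wg p ≤ 1 := le_trans (deg_le hWgG p) (le_of_eq hdegGp)
      have h2 : deg Wh p ≤ 1 := le_trans (deg_le hWhH p) (le_of_eq hdegHp)
      have h3 := hdegW p
      omega
    · rw [← hWeq]
      exact (glue_rest hG hH hn hpG hpH hWgG hWhH).symm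
  · rintro ⟨g, ⟨Wg, ⟨hWgG, hWgint⟩, rfl⟩, h, ⟨Wh, ⟨hWhH, hWhint⟩, rfl⟩, hxor, rfl⟩
    refine ⟨Wg ∪ Wh, ⟨Finset.union_subset_union hWgG hWhH, fun v hv => ?_⟩,
      glue_rest hG hH hn hpG hpH hWgG hWhH⟩
    have hdisjW : Disjoint Wg Wh := Finset.disjoint_of_subset_left hWgG
      (Finset.disjoint_of_subset_right hWhH hdisj)
    rw [deg_union hdisjW]
    rw [mem_internal, nodes_union, deg_union hdisj, Finset.mem_union] at hv
    by_cases hvp : v = p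
    · rw [hrg Wg hWgG, hrh Wh hWhH] at hxor
      have h1 : deg Wg p ≤ 1 := le_trans (deg_le hWgG p) (le_of_eq hdegGp)
      have h2 : deg Wh p ≤ 1 := le_trans (deg_le hWhH p) (le_of_eq hdegHp)
      rw [hvp]
      have hd : (deg Wg p = 1 ∧ ¬ deg Wh p = 1) ∨ (¬ deg Wg p = 1 ∧ deg Wh p = 1) := by
        tauto
      omega
    · rcases hv.1 with hvG | hvH
      · have hdH : deg H v = 0 := by
          by_contra hc
          exact hvp (shared_node hn hvG (mem_nodes_iff_deg_pos.2 (by omega)))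
        have h1 : deg Wg v = 1 := hWgint v (mem_internal.2 ⟨hvG, by omega⟩)
        have h2 : deg Wh v ≤ deg H v := deg_le hWhH v
        omega
      · have hdG : deg G v = 0 := by
          by_contra hc
          exact hvp (shared_node hn (mem_nodes_iff_deg_pos.2 (by omega)) hvH)
        have h1 : deg Wh v = 1 := hWhint v (mem_internal.2 ⟨hvH, by omega⟩)
        have h2 : deg Wg v ≤ deg G v := deg_le hWgG v
        omega

end Glue

section DisjUnion
variable {G H : Graph}

lemma not_shared (hn : Disjoint (nodes G) (nodes H)) {v : Node}
    (h1 : v ∈ nodes G) (h2 : v ∈ nodes H) : False :=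
  Finset.disjoint_left.1 hn h1 h2

variable (hG : IsGraph G) (hn : Disjoint (nodes G) (nodes H))
include hG hn

lemma node_edge_disjoint : Disjoint G H := by
  rw [Finset.disjoint_left]
  intro e heG heH
  have h2 := hG e heG
  have : e.Nonempty := Finset.card_pos.1 (by omega)
  obtain ⟨v, hv⟩ := this
  exact not_shared hn (mem_nodes.2 ⟨e, heG, hv⟩) (mem_nodes.2 ⟨e, heH, hv⟩)

lemma union_ports : ports (G ∪ H) = ports G ∪ ports H := by
  have hdisj := node_edge_disjoint hG hn
  ext v
  rw [Finset.mem_union, mem_ports, mem_ports, mem_ports, deg_union hdisj]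
  have dG := @mem_nodes_iff_deg_pos G v
  have dH := @mem_nodes_iff_deg_pos H v
  have hnb : ¬(0 < deg G v ∧ 0 < deg H v) := fun ⟨a, b⟩ => not_shared hn (dG.2 a) (dH.2 b)
  omega

lemma union_rest {Wg Wh : Graph} (hWg : Wg ⊆ G) (hWh : Wh ⊆ H) :
    rest (Wg ∪ Wh) (ports (G ∪ H)) = rest Wg (ports G) ∪ rest Wh (ports H) := by
  rw [union_ports hG hn]
  ext v
  simp only [rest, Finset.mem_inter, Finset.mem_union, nodes_union]
  have hc1 : v ∈ ports G → v ∈ nodes Wh → False := fun h1 h2 =>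
    not_shared hn (ports_subset_nodes G h1) (nodes_subset hWh h2)
  have hc2 : v ∈ ports H → v ∈ nodes Wg → False := fun h1 h2 =>
    not_shared hn (nodes_subset hWg h2) (ports_subset_nodes H h1)
  tauto

lemma union_KP : KP (G ∪ H) = {k | ∃ g ∈ KP G, ∃ h ∈ KP H, g ∪ h = k} := by
  have hdisj := node_edge_disjoint hG hn
  ext k
  simp only [KP, Set.mem_setOf_eq]
  constructor
  · rintro ⟨W, ⟨hWsub, hWint⟩, rfl⟩
    set Wg : Graph := W ∩ G with hWgdef
    set Wh : Graph := W ∩ H with hWhdef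
    have hWgG : Wg ⊆ G := Finset.inter_subset_right
    have hWhH : Wh ⊆ H := Finset.inter_subset_right
    have hWeq : Wg ∪ Wh = W := by
      rw [hWgdef, hWhdef, ← Finset.inter_union_distrib_left]
      exact Finset.inter_eq_left.2 hWsub
    have hdegW : ∀ v, deg W v = deg Wg v + deg Wh v := by
      intro v
      rw [← hWeq, deg_union (Finset.disjoint_of_subset_left hWgG
        (Finset.disjoint_of_subset_right hWhH hdisj))]
    have hkekG : IsKekule G Wg := by
      refine ⟨hWgG, fun v hv => ?_⟩
      rw [mem_internal] at hv
      have hdH : deg H v = 0 := by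
        by_contra h
        exact not_shared hn hv.1 (mem_nodes_iff_deg_pos.2 (by omega))
      have hvint : v ∈ internal (G ∪ H) := by
        rw [mem_internal, nodes_union, deg_union hdisj, hdH]
        exact ⟨Finset.mem_union_left _ hv.1, by omega⟩
      have h1 := hWint v hvint
      have h2 : deg Wh v ≤ deg H v := deg_le hWhH v
      have h3 := hdegW v
      omega
    have hkekH : IsKekule H Wh := by
      refine ⟨hWhH, fun v hv => ?_⟩
      rw [mem_internal] at hv
      have hdG : deg G v = 0 := by
        by_contra h
        exact not_shared hn (mem_nodes_iff_deg_pos.2 (by omega)) hv.1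
      have hvint : v ∈ internal (G ∪ H) := by
        rw [mem_internal, nodes_union, deg_union hdisj, hdG]
        exact ⟨Finset.mem_union_right _ hv.1, by omega⟩
      have h1 := hWint v hvint
      have h2 : deg Wg v ≤ deg G v := deg_le hWgG v
      have h3 := hdegW v
      omega
    refine ⟨rest Wg (ports G), ⟨Wg, hkekG, rfl⟩, rest Wh (ports H), ⟨Wh, hkekH, rfl⟩, ?_⟩
    rw [← hWeq]
    exact (union_rest hG hn hWgG hWhH).symm
  · rintro ⟨g, ⟨Wg, ⟨hWgG, hWgint⟩, rfl⟩, h, ⟨Wh, ⟨hWhH, hWhint⟩, rfl⟩, rfl⟩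
    refine ⟨Wg ∪ Wh, ⟨Finset.union_subset_union hWgG hWhH, fun v hv => ?_⟩,
      union_rest hG hn hWgG hWhH⟩
    have hdisjW : Disjoint Wg Wh := Finset.disjoint_of_subset_left hWgG
      (Finset.disjoint_of_subset_right hWhH hdisj)
    rw [deg_union hdisjW]
    rw [mem_internal, nodes_union, deg_union hdisj, Finset.mem_union] at hv
    rcases hv.1 with hvG | hvH
    · have hdH : deg H v = 0 := by
        by_contra hc
        exact not_shared hn hvG (mem_nodes_iff_deg_pos.2 (by omega))
      have h1 : deg Wg v = 1 := hWgint v (mem_internal.2 ⟨hvG, by omega⟩)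
      have h2 : deg Wh v ≤ deg H v := deg_le hWhH v
      omega
    · have hdG : deg G v = 0 := by
        by_contra hc
        exact not_shared hn (mem_nodes_iff_deg_pos.2 (by omega)) hvH
      have h1 : deg Wh v = 1 := hWhint v (mem_internal.2 ⟨hvH, by omega⟩)
      have h2 : deg Wg v ≤ deg G v := deg_le hWgG v
      omega

end DisjUnion

instance (G : Graph) : Decidable (IsGraph G) := by unfold IsGraph; infer_instance
instance (G W : Graph) : Decidable (IsKekule G W) := by unfold IsKekule; infer_instance

-- gadgets
def gadOddC : Graph := {{0,1},{1,2},{1,3},{2,3}}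
def gadEvenC : Graph := {{0,1},{1,2},{2,3},{3,4},{4,1}}

lemma gadOddC_nodes : nodes gadOddC = {0,1,2,3} := by decide
lemma gadEvenC_nodes : nodes gadEvenC = {0,1,2,3,4} := by decide

lemma gadOddC_KP : KP gadOddC = {({0} : Finset Node)} := by
  ext k
  constructor
  · rintro ⟨W, hW, rfl⟩
    have key : ∀ W ∈ gadOddC.powerset, IsKekule gadOddC W →
        rest W (ports gadOddC) = {0} := by decide
    exact key W (Finset.mem_powerset.2 hW.1) hW
  · rintro rfl
    exact ⟨{{0,1},{2,3}}, by decide, by decide⟩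

lemma gadEvenC_KP : KP gadEvenC = {(∅ : Finset Node)} := by
  ext k
  constructor
  · rintro ⟨W, hW, rfl⟩
    have key : ∀ W ∈ gadEvenC.powerset, IsKekule gadEvenC W →
        rest W (ports gadEvenC) = ∅ := by decide
    exact key W (Finset.mem_powerset.2 hW.1) hW
  · rintro rfl
    exact ⟨{{1,2},{3,4}}, by decide, by decide⟩

lemma gadOdd_exists (p x y z : ℕ) (h1 : p ≠ x) (h2 : p ≠ y) (h3 : p ≠ z)
    (h4 : x ≠ y) (h5 : x ≠ z) (h6 : y ≠ z) :
    ∃ H : Graph, IsGraph H ∧ ports H = {p} ∧ KP H = {({p} : Finset Node)} ∧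
      nodes H = {p, x, y, z} := by
  let f : ℕ → ℕ := fun i => if i = 0 then p else if i = 1 then x else
    if i = 2 then y else if i = 3 then z else i
  have hf0 : f 0 = p := rfl
  have hf1 : f 1 = x := rfl
  have hf2 : f 2 = y := rfl
  have hf3 : f 3 = z := rfl
  have hmem : ∀ a ∈ nodes gadOddC, a = 0 ∨ a = 1 ∨ a = 2 ∨ a = 3 := by
    rw [gadOddC_nodes]; decide
  have hf : ∀ a ∈ nodes gadOddC, ∀ b ∈ nodes gadOddC, f a = f b → a = b := by
    intro a ha b hb hab
    rcases hmem a ha with rfl | rfl | rfl | rfl <;>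
      rcases hmem b hb with rfl | rfl | rfl | rfl <;>
      simp_all [hf0, hf1, hf2, hf3]
  refine ⟨mapG f gadOddC, mapG_isGraph hf (by decide), ?_, ?_, ?_⟩
  · rw [mapG_ports hf, show ports gadOddC = {0} by decide,
      Finset.image_singleton, hf0]
  · rw [mapG_KP hf, gadOddC_KP, Set.image_singleton, Finset.image_singleton, hf0]
  · rw [mapG_nodes hf, gadOddC_nodes, Finset.image_insert, Finset.image_insert,
      Finset.image_insert, Finset.image_singleton, hf0, hf1, hf2, hf3]

lemma gadEven_exists (p x y z w : ℕ) (h1 : p ≠ x) (h2 : p ≠ y) (h3 : p ≠ z)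
    (h4 : p ≠ w) (h5 : x ≠ y) (h6 : x ≠ z) (h7 : x ≠ w) (h8 : y ≠ z) (h9 : y ≠ w)
    (h10 : z ≠ w) :
    ∃ H : Graph, IsGraph H ∧ ports H = {p} ∧ KP H = {(∅ : Finset Node)} ∧
      nodes H = {p, x, y, z, w} := by
  let f : ℕ → ℕ := fun i => if i = 0 then p else if i = 1 then x else
    if i = 2 then y else if i = 3 then z else if i = 4 then w else i
  have hf0 : f 0 = p := rfl
  have hf1 : f 1 = x := rfl
  have hf2 : f 2 = y := rfl
  have hf3 : f 3 = z := rfl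
  have hf4 : f 4 = w := rfl
  have hmem : ∀ a ∈ nodes gadEvenC, a = 0 ∨ a = 1 ∨ a = 2 ∨ a = 3 ∨ a = 4 := by
    rw [gadEvenC_nodes]; decide
  have hf : ∀ a ∈ nodes gadEvenC, ∀ b ∈ nodes gadEvenC, f a = f b → a = b := by
    intro a ha b hb hab
    rcases hmem a ha with rfl | rfl | rfl | rfl | rfl <;>
      rcases hmem b hb with rfl | rfl | rfl | rfl | rfl <;>
      simp_all [hf0, hf1, hf2, hf3, hf4]
  refine ⟨mapG f gadEvenC, mapG_isGraph hf (by decide), ?_, ?_, ?_⟩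
  · rw [mapG_ports hf, show ports gadEvenC = {0} by decide,
      Finset.image_singleton, hf0]
  · rw [mapG_KP hf, gadEvenC_KP, Set.image_singleton, Finset.image_empty]
  · rw [mapG_nodes hf, gadEvenC_nodes, Finset.image_insert, Finset.image_insert,
      Finset.image_insert, Finset.image_insert, Finset.image_singleton,
      hf0, hf1, hf2, hf3, hf4]


lemma lt_sup_succ {s : Finset ℕ} {v : ℕ} (hv : v ∈ s) : v < s.sup id + 1 := by
  have h := Finset.le_sup (f := id) hv
  simp only [id] at h
  exact Nat.lt_succ_of_le h

lemma union_isGraph {G H : Graph} (hG : IsGraph G) (hH : IsGraph H) :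
    IsGraph (G ∪ H) := by
  intro e he
  rcases Finset.mem_union.1 he with h | h
  exacts [hG e h, hH e h]

lemma remove_port {P : Finset Node} {K : Set (Finset Node)} (h : IsKekuleCell P K)
    {p : ℕ} (hp : p ∈ P)
    (hcond : (∀ g ∈ K, p ∈ g) ∨ (∀ g ∈ K, p ∉ g)) :
    IsKekuleCell (P.erase p) ((fun g => g.erase p) '' K) := by
  classical
  obtain ⟨G, hG, hports, hKP⟩ := h
  subst hports hKP
  obtain ⟨M, hM⟩ : ∃ M : ℕ, M = (nodes G).sup id + 1 := ⟨_, rfl⟩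
  have hfresh : ∀ v : ℕ, v ∈ nodes G → v < M := by
    intro v hv; rw [hM]; exact lt_sup_succ hv
  have hpG : p ∈ ports G := hp
  have hpn : p ∈ nodes G := ports_subset_nodes G hp
  have hpM : p < M := hfresh p hpn
  have hfreshn : ∀ i : ℕ, M ≤ i → i ∉ nodes G := fun i hi hin =>
    absurd (hfresh i hin) (by omega)
  rcases hcond with hcond | hcond
  · -- p always in: use even gadget (KP = {∅})
    obtain ⟨H, hHgraph, hHports, hHKP, hHnodes⟩ :=
      gadEven_exists p M (M+1) (M+2) (M+3) (by omega) (by omega) (by omega) (by omega)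
        (by omega) (by omega) (by omega) (by omega) (by omega) (by omega)
    have hn : nodes G ∩ nodes H ⊆ {p} := by
      intro v hv
      rw [Finset.mem_inter, hHnodes] at hv
      simp only [Finset.mem_insert, Finset.mem_singleton] at hv ⊢
      rcases hv.2 with h | h | h | h | h
      · exact h
      all_goals exact absurd hv.1 (h ▸ hfreshn _ (by omega))
    have hpH : p ∈ ports H := by rw [hHports]; exact Finset.mem_singleton_self p
    refine ⟨G ∪ H, union_isGraph hG hHgraph, ?_, ?_⟩
    · rw [glue_ports hG hHgraph hn hpG hpH, hHports]
      ext a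
      simp only [Finset.mem_erase, Finset.mem_union, Finset.mem_singleton]
      tauto
    · rw [glue_KP hG hHgraph hn hpG hpH, hHKP]
      ext k
      simp only [Set.mem_setOf_eq, Set.mem_image, Set.mem_singleton_iff]
      constructor
      · rintro ⟨g, hg, h, rfl, _, rfl⟩
        exact ⟨g, hg, by rw [Finset.union_empty]⟩
      · rintro ⟨g, hg, rfl⟩
        exact ⟨g, hg, ∅, rfl, by simp [hcond g hg], by rw [Finset.union_empty]⟩
  · -- p never in: use odd gadget (KP = {{p}})
    obtain ⟨H, hHgraph, hHports, hHKP, hHnodes⟩ :=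
      gadOdd_exists p M (M+1) (M+2) (by omega) (by omega) (by omega) (by omega)
        (by omega) (by omega)
    have hn : nodes G ∩ nodes H ⊆ {p} := by
      intro v hv
      rw [Finset.mem_inter, hHnodes] at hv
      simp only [Finset.mem_insert, Finset.mem_singleton] at hv ⊢
      rcases hv.2 with h | h | h | h
      · exact h
      all_goals exact absurd hv.1 (h ▸ hfreshn _ (by omega))
    have hpH : p ∈ ports H := by rw [hHports]; exact Finset.mem_singleton_self p
    refine ⟨G ∪ H, union_isGraph hG hHgraph, ?_, ?_⟩
    · rw [glue_ports hG hHgraph hn hpG hpH, hHports]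
      ext a
      simp only [Finset.mem_erase, Finset.mem_union, Finset.mem_singleton]
      tauto
    · rw [glue_KP hG hHgraph hn hpG hpH, hHKP]
      ext k
      simp only [Set.mem_setOf_eq, Set.mem_image, Set.mem_singleton_iff]
      constructor
      · rintro ⟨g, hg, h, rfl, _, rfl⟩
        refine ⟨g, hg, ?_⟩
        ext a
        simp only [Finset.mem_erase, Finset.mem_union, Finset.mem_singleton]
        tauto
      · rintro ⟨g, hg, rfl⟩
        refine ⟨g, hg, {p}, rfl, by simp [hcond g hg], ?_⟩
        ext a
        simp only [Finset.mem_erase, Finset.mem_union, Finset.mem_singleton]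
        tauto

lemma add_port {Q : Finset Node} {K : Set (Finset Node)} (h : IsKekuleCell Q K)
    {p : ℕ} (hp : p ∉ Q) :
    IsKekuleCell (insert p Q) ((fun g => insert p g) '' K) ∧
    IsKekuleCell (insert p Q) K := by
  classical
  obtain ⟨G, hG, hports, hKP⟩ := h
  subst hports hKP
  -- relabel G to avoid the node p
  obtain ⟨n, hn⟩ : ∃ n : ℕ, n = (insert p (nodes G)).sup id + 1 := ⟨_, rfl⟩
  have hfreshn : ∀ v : ℕ, v ∈ insert p (nodes G) → v < n := by
    intro v hv; rw [hn]; exact lt_sup_succ hv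
  have hpn : p < n := hfreshn p (Finset.mem_insert_self p _)
  have hnp : n ≠ p := by omega
  have hnG : n ∉ nodes G := fun hin =>
    absurd (hfreshn n (Finset.mem_insert_of_mem hin)) (by omega)
  set f : ℕ → ℕ := fun v => if v = p then n else if v = n then p else v with hfdef
  have hfp : f p = n := by simp [hfdef]
  have hfn : f n = p := by simp [hfdef, hnp]
  have hfother : ∀ v, v ≠ p → v ≠ n → f v = v := by
    intro v h1 h2; simp [hfdef, h1, h2]
  have hinv : ∀ a, f (f a) = a := by
    intro a
    by_cases h1 : a = p
    · rw [h1, hfp, hfn]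
    · by_cases h2 : a = n
      · rw [h2, hfn, hfp]
      · rw [hfother a h1 h2, hfother a h1 h2]
  have hinj : ∀ a ∈ nodes G, ∀ b ∈ nodes G, f a = f b → a = b := by
    intro a _ b _ hab
    have := congrArg f hab
    rwa [hinv, hinv] at this
  set G2 := mapG f G with hG2
  have hG2graph : IsGraph G2 := mapG_isGraph hinj hG
  have hfixed : ∀ q ∈ nodes G, q ≠ p → f q = q := by
    intro q hq hqp
    exact hfother q hqp (fun hqn => hnG (hqn ▸ hq))
  have hports2 : ports G2 = ports G := by
    rw [hG2, mapG_ports hinj]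
    apply Finset.image_congr (g := id) ?_ |>.trans (Finset.image_id)
    intro q hq
    have hq' : q ∈ ports G := hq
    exact hfixed q (ports_subset_nodes G hq') (fun h => hp (h ▸ hq'))
  have hKP2 : KP G2 = KP G := by
    rw [hG2, mapG_KP hinj]
    apply Set.image_congr (g := id) ?_ |>.trans (Set.image_id _)
    intro g hg
    have hsub := KP_subset hg
    apply Finset.image_congr (g := id) ?_ |>.trans (Finset.image_id)
    intro q hq
    exact hfixed q (ports_subset_nodes G (hsub hq)) (fun h => hp (h ▸ hsub hq))
  have hpG2 : p ∉ nodes G2 := by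
    rw [hG2, mapG_nodes hinj]
    intro hmem
    obtain ⟨v, hv, hfv⟩ := Finset.mem_image.1 hmem
    by_cases h1 : v = p
    · rw [h1, hfp] at hfv; exact hnp hfv
    · by_cases h2 : v = n
      · exact hnG (h2 ▸ hv)
      · rw [hfother v h1 h2] at hfv; exact h1 hfv
  -- fresh gadget nodes
  obtain ⟨M, hM⟩ : ∃ M : ℕ, M = (insert p (nodes G2)).sup id + 1 := ⟨_, rfl⟩
  have hfreshM : ∀ v : ℕ, v ∈ insert p (nodes G2) → v < M := by
    intro v hv; rw [hM]; exact lt_sup_succ hv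
  have hpM : p < M := hfreshM p (Finset.mem_insert_self p _)
  have hfresh2 : ∀ i : ℕ, M ≤ i → i ∉ nodes G2 := fun i hi hin =>
    absurd (hfreshM i (Finset.mem_insert_of_mem hin)) (by omega)
  constructor
  · -- add always-in port: odd gadget, KP = {{p}}
    obtain ⟨H, hHgraph, hHports, hHKP, hHnodes⟩ :=
      gadOdd_exists p M (M+1) (M+2) (by omega) (by omega) (by omega) (by omega)
        (by omega) (by omega)
    have hdisj : Disjoint (nodes G2) (nodes H) := by
      rw [Finset.disjoint_right, hHnodes]
      intro v hv
      simp only [Finset.mem_insert, Finset.mem_singleton] at hv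
      rcases hv with h | h | h | h
      · exact h ▸ hpG2
      all_goals exact h ▸ hfresh2 _ (by omega)
    refine ⟨G2 ∪ H, union_isGraph hG2graph hHgraph, ?_, ?_⟩
    · rw [union_ports hG2graph hdisj, hports2, hHports]
      ext a
      simp only [Finset.mem_union, Finset.mem_insert, Finset.mem_singleton]
      tauto
    · rw [union_KP hG2graph hdisj, hKP2, hHKP]
      ext k
      simp only [Set.mem_setOf_eq, Set.mem_image, Set.mem_singleton_iff]
      constructor
      · rintro ⟨g, hg, h, rfl, rfl⟩
        exact ⟨g, hg, by rw [Finset.union_comm]; rfl⟩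
      · rintro ⟨g, hg, rfl⟩
        exact ⟨g, hg, {p}, rfl, by rw [Finset.union_comm]; rfl⟩
  · -- add never-in port: even gadget, KP = {∅}
    obtain ⟨H, hHgraph, hHports, hHKP, hHnodes⟩ :=
      gadEven_exists p M (M+1) (M+2) (M+3) (by omega) (by omega) (by omega) (by omega)
        (by omega) (by omega) (by omega) (by omega) (by omega) (by omega)
    have hdisj : Disjoint (nodes G2) (nodes H) := by
      rw [Finset.disjoint_right, hHnodes]
      intro v hv
      simp only [Finset.mem_insert, Finset.mem_singleton] at hv
      rcases hv with h | h | h | h | h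
      · exact h ▸ hpG2
      all_goals exact h ▸ hfresh2 _ (by omega)
    refine ⟨G2 ∪ H, union_isGraph hG2graph hHgraph, ?_, ?_⟩
    · rw [union_ports hG2graph hdisj, hports2, hHports]
      ext a
      simp only [Finset.mem_union, Finset.mem_insert, Finset.mem_singleton]
      tauto
    · rw [union_KP hG2graph hdisj, hKP2, hHKP]
      ext k
      simp only [Set.mem_setOf_eq, Set.mem_singleton_iff]
      constructor
      · rintro ⟨g, hg, h, rfl, rfl⟩
        rwa [Finset.union_empty]
      · intro hk
        exact ⟨k, hk, ∅, rfl, Finset.union_empty k⟩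


lemma remove_iter (S : Finset Node) : ∀ (P : Finset Node) (K : Set (Finset Node)),
    IsKekuleCell P K → S ⊆ P →
    (∀ p ∈ S, (∀ g ∈ K, p ∈ g) ∨ (∀ g ∈ K, p ∉ g)) →
    IsKekuleCell (P \ S) ((fun g => g \ S) '' K) := by
  classical
  induction S using Finset.induction_on with
  | empty =>
    intro P K h _ _
    have e : (fun g : Finset Node => g \ (∅ : Finset Node)) '' K = K := by
      apply (Set.image_congr (g := id) ?_).trans (Set.image_id _)
      intro g _
      simp
    rw [Finset.sdiff_empty, e]
    exact h
  | @insert a S ha ih =>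
    intro P K h hS hc
    have h1 := remove_port h (hS (Finset.mem_insert_self a S))
      (hc a (Finset.mem_insert_self a S))
    have h2 := ih (P.erase a) ((fun g => g.erase a) '' K) h1 ?_ ?_
    · have e1 : P.erase a \ S = P \ insert a S := by
        ext v
        simp only [Finset.mem_erase, Finset.mem_sdiff, Finset.mem_insert]
        tauto
      have e2 : (fun g => g \ S) '' ((fun g => g.erase a) '' K) =
          (fun g => g \ insert a S) '' K := by
        rw [Set.image_image]
        apply Set.image_congr
        intro g _
        ext v
        simp only [Finset.mem_sdiff, Finset.mem_erase, Finset.mem_insert]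
        tauto
      rw [e1, e2] at h2
      exact h2
    · intro q hq
      exact Finset.mem_erase.2 ⟨fun h' => ha (h' ▸ hq), hS (Finset.mem_insert_of_mem hq)⟩
    · intro q hq
      rcases hc q (Finset.mem_insert_of_mem hq) with hcase | hcase
      · left
        rintro g' ⟨g, hg, rfl⟩
        exact Finset.mem_erase.2 ⟨fun h' => ha (h' ▸ hq), hcase g hg⟩
      · right
        rintro g' ⟨g, hg, rfl⟩ hq'
        exact hcase g hg (Finset.mem_of_mem_erase hq')

lemma add_iter (S A : Finset Node) : ∀ (Q : Finset Node) (K : Set (Finset Node)),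
    IsKekuleCell Q K → Disjoint S Q →
    IsKekuleCell (Q ∪ S) ((fun g => g ∪ (S ∩ A)) '' K) := by
  classical
  induction S using Finset.induction_on with
  | empty =>
    intro Q K h _
    have e : (fun g : Finset Node => g ∪ ((∅ : Finset Node) ∩ A)) '' K = K := by
      apply (Set.image_congr (g := id) ?_).trans (Set.image_id _)
      intro g _
      simp
    rw [Finset.union_empty, e]
    exact h
  | @insert a S ha ih =>
    intro Q K h hdisj
    have haQ : a ∉ Q := Finset.disjoint_left.1 hdisj (Finset.mem_insert_self a S)
    have hdS : Disjoint S Q :=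
      Finset.disjoint_of_subset_left (Finset.subset_insert a S) hdisj
    have h1 := ih Q K h hdS
    have haQS : a ∉ Q ∪ S := by
      rw [Finset.mem_union]
      rintro (h' | h')
      exacts [haQ h', ha h']
    have e1 : insert a (Q ∪ S) = Q ∪ insert a S := by
      ext v
      simp only [Finset.mem_insert, Finset.mem_union]
      tauto
    by_cases haA : a ∈ A
    · have h2 := (add_port h1 haQS).1
      rw [e1, Set.image_image] at h2
      have e2 : (fun g => insert a (g ∪ (S ∩ A))) '' K =
          (fun g => g ∪ (insert a S ∩ A)) '' K := by
        apply Set.image_congr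
        intro g _
        ext v
        by_cases hva : v = a
        · subst hva
          simp [haA]
        · simp [hva]
      rw [e2] at h2
      exact h2
    · have h2 := (add_port h1 haQS).2
      rw [e1] at h2
      have e2 : insert a S ∩ A = S ∩ A := by
        ext v
        simp only [Finset.mem_inter, Finset.mem_insert]
        constructor
        · rintro ⟨h' | h', hA⟩
          · exact absurd (h' ▸ hA) haA
          · exact ⟨h', hA⟩
        · rintro ⟨h', hA⟩
          exact ⟨Or.inr h', hA⟩
      rw [← e2] at h2
      exact h2


theorem statement7' (P : Finset Node) (K : Set (Finset Node))
    (hKP : ∀ k ∈ K, k ⊆ P)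
    (Q : Finset Node) (hQ : ∀ p, p ∈ Q ↔ p ∈ P ∧ (∃ g ∈ K, ∃ g' ∈ K, p ∈ g ∧ p ∉ g')) :
    IsKekuleCell Q ((fun g => g ∩ Q) '' K) ↔ IsKekuleCell P K := by
  classical
  have hQP : Q ⊆ P := fun q hq => ((hQ q).1 hq).1
  constructor
  · intro hflex
    set A := (P \ Q).filter (fun p => ∃ g ∈ K, p ∈ g) with hA
    have h1 := add_iter (P \ Q) A Q ((fun g => g ∩ Q) '' K) hflex Finset.sdiff_disjoint
    have e1 : Q ∪ (P \ Q) = P := Finset.union_sdiff_of_subset hQP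
    have e2 : (P \ Q) ∩ A = A := Finset.inter_eq_right.2 (Finset.filter_subset _ _)
    rw [e1, e2, Set.image_image] at h1
    have himg : (fun g => g ∩ Q ∪ A) '' K = K := by
      apply (Set.image_congr (g := id) ?_).trans (Set.image_id _)
      intro g hg
      show g ∩ Q ∪ A = g
      ext v
      simp only [Finset.mem_union, Finset.mem_inter, hA, Finset.mem_filter,
        Finset.mem_sdiff]
      constructor
      · rintro (⟨h1, _⟩ | ⟨⟨hvP, hvQ⟩, g', hg', hvg'⟩)
        · exact h1
        · by_contra hvg
          exact hvQ ((hQ v).2 ⟨hvP, g', hg', g, hg, hvg', hvg⟩)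
      · intro hvg
        by_cases hvQ : v ∈ Q
        · exact Or.inl ⟨hvg, hvQ⟩
        · exact Or.inr ⟨⟨hKP g hg hvg, hvQ⟩, g, hg, hvg⟩
    rwa [himg] at h1
  · intro hK
    have hc : ∀ p ∈ P \ Q, (∀ g ∈ K, p ∈ g) ∨ (∀ g ∈ K, p ∉ g) := by
      intro p hp
      rw [Finset.mem_sdiff] at hp
      by_contra hcon
      push_neg at hcon
      obtain ⟨⟨g', hg', hpg'⟩, g, hg, hpg⟩ := hcon
      exact hp.2 ((hQ p).2 ⟨hp.1, g, hg, g', hg', hpg, hpg'⟩)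
    have h1 := remove_iter (P \ Q) P K hK Finset.sdiff_subset hc
    have e1 : P \ (P \ Q) = Q := by
      ext v
      simp only [Finset.mem_sdiff]
      constructor
      · rintro ⟨h1, h2⟩
        by_contra hq
        exact h2 ⟨h1, hq⟩
      · intro hv
        exact ⟨hQP hv, fun hcon => hcon.2 hv⟩
    have e2 : (fun g => g \ (P \ Q)) '' K = (fun g => g ∩ Q) '' K := by
      apply Set.image_congr
      intro g hg
      ext v
      simp only [Finset.mem_sdiff, Finset.mem_inter]
      constructor
      · rintro ⟨h1, h2⟩
        refine ⟨h1, ?_⟩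
        by_contra hq
        exact h2 ⟨hKP g hg h1, hq⟩
      · rintro ⟨h1, h2⟩
        exact ⟨h1, fun hcon => hcon.2 h2⟩
    rw [e1, e2] at h1
    exact h1


/-- `flex(K)` is a Kekulé cell over the set `Q` of flexible ports
if and only if `K` is a Kekulé cell over `P`. -/
theorem statement7 (P : Finset Node) (K : Set (Finset Node))
    (hKP : ∀ k ∈ K, k ⊆ P)
    (Q : Finset Node) (hQ : ∀ p, p ∈ Q ↔ p ∈ P ∧ Flexible K p) :
    IsKekuleCell Q ((fun g => g ∩ Q) '' K) ↔ IsKekuleCell P K := by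
  exact statement7' P K hKP Q hQ
end Kekule
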